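/- Unimodularity of the dressing factor on the symmetric points: for the rank-one dressing factor D_j(ζ) = I + B_j/(ζ−ζ_j) − σ₃B_jσ₃/(ζ+ζ_j) with B_j = |z_j⟩⟨y_j| as in the dressing construction, det D_j(ζ) = (ζ² − ζ̄_j²)/(ζ² − ζ_j²) for all ζ ∉ {±ζ_j}. -/

import Mathlib

open Matrix Filter Topology ComplexConjugate

noncomputable section

attribute [local instance] Matrix.normedAddCommGroup Matrix.normedSpace

abbrev M2 := Matrix (Fin 2) (Fin 2) ℂ

def σ3 : M2 := !![1, 0; 0, -1]

def σ2 : M2 := !![0, -Complex.I; Complex.I, 0]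

/-- A 2×2 matrix is diagonal if its off-diagonal entries vanish. -/
def IsDiag2 (A : M2) : Prop := A 0 1 = 0 ∧ A 1 0 = 0

/-- A 2×2 matrix is off-diagonal if its diagonal entries vanish. -/
def IsOffDiag2 (A : M2) : Prop := A 0 0 = 0 ∧ A 1 1 = 0

/-- Unimodularity of the dressing factor:
`det Dⱼ(ζ) = (ζ² − ζ̄ⱼ²)/(ζ² − ζⱼ²)` for `ζ ∉ {±ζⱼ}`. -/
theorem stmt19
    (zj : ℂ) (hzj : zj ^ 2 ≠ (conj zj) ^ 2)
    (y : Fin 2 → ℂ) (hy : y ≠ 0)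
    (α : ℂ) (hα : α * (zj * y 0 * conj (y 0) + conj zj * y 1 * conj (y 1)) = 1)
    (z : Fin 2 → ℂ)
    (hz0 : z 0 = (zj ^ 2 - (conj zj) ^ 2) / 2 * α * conj (y 0))
    (hz1 : z 1 = (zj ^ 2 - (conj zj) ^ 2) / 2 * conj α * conj (y 1))
    (B : M2) (hB : B = Matrix.vecMulVec z y)
    (E : ℂ → M2)
    (hE : ∀ w : ℂ, E w = 1 + (w - conj zj)⁻¹ • Bᴴ - (w + conj zj)⁻¹ • (σ3 * Bᴴ * σ3))
    (D : ℂ → M2)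
    (hD : ∀ w : ℂ, D w = 1 + (w - zj)⁻¹ • B - (w + zj)⁻¹ • (σ3 * B * σ3)) :
    ∀ w : ℂ, w ≠ zj → w ≠ -zj →
      (D w).det = (w ^ 2 - (conj zj) ^ 2) / (w ^ 2 - zj ^ 2) := by
  intro w hw1 hw2
  have hw1' : w - zj ≠ 0 := sub_ne_zero.mpr hw1
  have hw2' : w + zj ≠ 0 := fun h => hw2 (by linear_combination h)
  have e2 := congrArg conj hα
  simp only [_root_.map_mul, _root_.map_add, _root_.map_one, Complex.conj_conj] at e2
  have key : 2 * zj * (z 0 * y 0 + z 1 * y 1) - 4 * (z 0 * y 0) * (z 1 * y 1)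
      = zj ^ 2 - (conj zj) ^ 2 := by
    rw [hz0, hz1]
    linear_combination ((zj ^ 2 - (conj zj) ^ 2) * (1 - y 1 * conj (y 1) * conj α * zj)) * hα
      + ((zj ^ 2 - (conj zj) ^ 2) * (y 1 * conj (y 1) * α * conj zj)) * e2
  rw [hD w, hB, Matrix.det_fin_two]
  simp only [Matrix.add_apply, Matrix.sub_apply, Matrix.smul_apply, Matrix.one_apply,
    Matrix.vecMulVec_apply, σ3, Matrix.mul_apply, Fin.sum_univ_two, smul_eq_mul,
    Matrix.cons_val', Matrix.cons_val_zero, Matrix.cons_val_one, Matrix.head_cons,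
    Matrix.head_fin_const, Matrix.empty_val', Matrix.cons_val_fin_one,
    Matrix.of_apply, zero_ne_one, one_ne_zero, if_false, if_true]
  have hws : w ^ 2 - zj ^ 2 = (w - zj) * (w + zj) := by ring
  rw [hws]
  field_simp
  linear_combination ((w - zj) * (w + zj)) * key
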